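/- Let κ be a Markov kernel on a Polish space X which is strong Feller, and let μ and ν be two ergodic invariant probability measures for κ with μ ≠ ν. Then the topological supports of μ and ν are disjoint: supp μ ∩ supp ν = ∅. -/

import Mathlib

open MeasureTheory ProbabilityTheory ENNReal

/-- A Markov kernel is *strong Feller* if it maps bounded Borel measurable functions to
bounded continuous functions. -/
def IsStrongFeller {X : Type*} [TopologicalSpace X] [MeasurableSpace X]
    (κ : Kernel X X) : Prop :=
  ∀ ψ : X → ℝ, Measurable ψ → (∃ C, ∀ x, |ψ x| ≤ C) →
    Continuous fun x => ∫ y, ψ y ∂(κ x)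

/-- A measure `μ` is *invariant* for the kernel `κ` if `μ A = ∫ κ(x, A) μ(dx)` for every
Borel set `A`. -/
def KernelInvariant {X : Type*} [MeasurableSpace X] (κ : Kernel X X) (μ : Measure X) : Prop :=
  ∀ A : Set X, MeasurableSet A → μ A = ∫⁻ x, κ x A ∂μ

/-- An invariant measure `μ` is *ergodic* for `κ` if every Borel set `A` with
`κ(x, A) = 1` for `μ`-almost every `x ∈ A` satisfies `μ A ∈ {0, 1}`. -/
def KernelErgodic {X : Type*} [MeasurableSpace X] (κ : Kernel X X) (μ : Measure X) : Prop :=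
  ∀ A : Set X, MeasurableSet A → (∀ᵐ x ∂μ, x ∈ A → κ x A = 1) → μ A = 0 ∨ μ A = 1

/-- The topological support of a measure: the set of points all of whose open
neighbourhoods have positive measure (the smallest closed set of full measure). -/
def measureSupport {X : Type*} [TopologicalSpace X] [MeasurableSpace X]
    (μ : Measure X) : Set X :=
  {x | ∀ U : Set X, IsOpen U → x ∈ U → 0 < μ U}

lemma flux_balance {X : Type*} [MeasurableSpace X] (κ : Kernel X X) [IsMarkovKernel κ]
    (σ : Measure X) [IsFiniteMeasure σ]
    (hinv : ∀ A : Set X, MeasurableSet A → σ A = ∫⁻ x, κ x A ∂σ)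
    {A : Set X} (hA : MeasurableSet A) :
    ∫⁻ x in Aᶜ, κ x A ∂σ = ∫⁻ x in A, κ x Aᶜ ∂σ := by
  have hk : Measurable fun x => κ x A := Kernel.measurable_coe κ hA
  have h1 : σ A = ∫⁻ x in A, κ x A ∂σ + ∫⁻ x in Aᶜ, κ x A ∂σ := by
    rw [hinv A hA, ← lintegral_add_compl _ hA]
  have h2 : σ A = ∫⁻ x in A, κ x A ∂σ + ∫⁻ x in A, κ x Aᶜ ∂σ := by
    rw [← lintegral_add_left hk]
    calc σ A = ∫⁻ _ in A, 1 ∂σ := (setLIntegral_one A).symm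
      _ = ∫⁻ x in A, (κ x A + κ x Aᶜ) ∂σ := by
          refine setLIntegral_congr_fun_ae hA (Filter.Eventually.of_forall fun x _ => ?_)
          rw [measure_add_measure_compl hA, measure_univ]
  have hfin : ∫⁻ x in A, κ x A ∂σ ≠ ⊤ := by
    refine ne_of_lt (lt_of_le_of_lt ?_ (measure_lt_top σ A))
    calc ∫⁻ x in A, κ x A ∂σ ≤ ∫⁻ _ in A, 1 ∂σ := lintegral_mono fun x => prob_le_one
      _ = σ A := setLIntegral_one A
  exact (ENNReal.add_right_inj hfin).mp (h1.symm.trans h2)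

lemma level_flux {X : Type*} [MeasurableSpace X] (κ : Kernel X X) [IsMarkovKernel κ]
    (lam μ : Measure X) [IsFiniteMeasure lam] [IsFiniteMeasure μ]
    (hlaminv : ∀ A : Set X, MeasurableSet A → lam A = ∫⁻ x, κ x A ∂lam)
    (hμinv : ∀ A : Set X, MeasurableSet A → μ A = ∫⁻ x, κ x A ∂μ)
    {h : X → ℝ≥0∞} (hmeas : Measurable h) (hwd : lam.withDensity h = μ)
    {c : ℝ≥0∞} (hctop : c ≠ ⊤) (hcatom : lam {x | h x = c} = 0) :
    (∀ᵐ x ∂lam, x ∈ {x | c < h x} → κ x {x | c < h x}ᶜ = 0) ∧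
    (∀ᵐ x ∂lam, x ∈ {x | c < h x}ᶜ → κ x {x | c < h x} = 0) := by
  set A := {x | c < h x} with hAdef
  have hA : MeasurableSet A := measurableSet_lt measurable_const hmeas
  have hk : Measurable fun x => κ x A := Kernel.measurable_coe κ hA
  have hkc : Measurable fun x => κ x Aᶜ := Kernel.measurable_coe κ hA.compl
  have hden : ∀ (S : Set X), MeasurableSet S → ∀ (F : X → ℝ≥0∞), Measurable F →
      ∫⁻ x in S, F x ∂μ = ∫⁻ x in S, h x * F x ∂lam := by
    intro S hS F hF
    rw [← hwd, restrict_withDensity hS, lintegral_withDensity_eq_lintegral_mul _ hmeas hF]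
    rfl
  have hfluxμ := flux_balance κ μ hμinv hA
  have hfluxL := flux_balance κ lam hlaminv hA
  have E1 : ∫⁻ x in A, h x * κ x Aᶜ ∂lam
      = c * ∫⁻ x in A, κ x Aᶜ ∂lam + ∫⁻ x in A, (h x - c) * κ x Aᶜ ∂lam := by
    rw [← lintegral_const_mul c hkc, ← lintegral_add_left (f := fun x => c * κ x Aᶜ) (measurable_const.mul hkc)]
    refine setLIntegral_congr_fun_ae hA (Filter.Eventually.of_forall fun x hx => ?_)
    calc h x * κ x Aᶜ = (c + (h x - c)) * κ x Aᶜ := by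
          rw [add_tsub_cancel_of_le (le_of_lt hx)]
      _ = _ := add_mul _ _ _
  have E2 : c * ∫⁻ x in Aᶜ, κ x A ∂lam
      = ∫⁻ x in Aᶜ, h x * κ x A ∂lam + ∫⁻ x in Aᶜ, (c - h x) * κ x A ∂lam := by
    rw [← lintegral_const_mul c hk, ← lintegral_add_left (f := fun x => h x * κ x A) (hmeas.mul hk)]
    refine setLIntegral_congr_fun_ae hA.compl (Filter.Eventually.of_forall fun x hx => ?_)
    have hxle : h x ≤ c := not_lt.mp hx
    calc c * κ x A = (h x + (c - h x)) * κ x A := by rw [add_tsub_cancel_of_le hxle]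
      _ = _ := add_mul _ _ _
  set P := ∫⁻ x in A, (h x - c) * κ x Aᶜ ∂lam with hPdef
  set Q := ∫⁻ x in Aᶜ, (c - h x) * κ x A ∂lam with hQdef
  have d_in : ∫⁻ x in Aᶜ, κ x A ∂μ = ∫⁻ x in Aᶜ, h x * κ x A ∂lam := hden Aᶜ hA.compl _ hk
  have d_out : ∫⁻ x in A, κ x Aᶜ ∂μ = ∫⁻ x in A, h x * κ x Aᶜ ∂lam := hden A hA _ hkc
  have key : c * ∫⁻ x in Aᶜ, κ x A ∂lam = c * ∫⁻ x in Aᶜ, κ x A ∂lam + (P + Q) := by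
    calc c * ∫⁻ x in Aᶜ, κ x A ∂lam
        = ∫⁻ x in Aᶜ, h x * κ x A ∂lam + Q := E2
      _ = (∫⁻ x in A, h x * κ x Aᶜ ∂lam) + Q := by rw [← d_in, hfluxμ, d_out]
      _ = (c * ∫⁻ x in A, κ x Aᶜ ∂lam + P) + Q := by rw [E1]
      _ = (c * ∫⁻ x in Aᶜ, κ x A ∂lam + P) + Q := by rw [hfluxL]
      _ = c * ∫⁻ x in Aᶜ, κ x A ∂lam + (P + Q) := by rw [add_assoc]
  have hint_le : ∫⁻ x in Aᶜ, κ x A ∂lam ≤ lam Aᶜ := by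
    calc _ ≤ ∫⁻ _ in Aᶜ, 1 ∂lam := lintegral_mono fun x => prob_le_one
      _ = lam Aᶜ := setLIntegral_one _
  have hfin : c * ∫⁻ x in Aᶜ, κ x A ∂lam ≠ ⊤ :=
    ENNReal.mul_ne_top hctop (hint_le.trans_lt (measure_lt_top _ _)).ne
  have hPQ : (0 : ℝ≥0∞) = P + Q := by
    refine (ENNReal.add_right_inj hfin).mp ?_
    rw [add_zero]; exact key
  have hP : P = 0 := (add_eq_zero.mp hPQ.symm).1
  have hQ : Q = 0 := (add_eq_zero.mp hPQ.symm).2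
  constructor
  · have hP0 : ∀ᵐ x ∂(lam.restrict A), (h x - c) * κ x Aᶜ = 0 := by
      have := (lintegral_eq_zero_iff ((hmeas.sub measurable_const).mul hkc)).mp hP
      filter_upwards [this] with x hx using hx
    have hIi := (ae_restrict_iff' hA).mp hP0
    filter_upwards [hIi] with x hx hxA
    have h1 : h x - c ≠ 0 := fun h0 => absurd (tsub_eq_zero_iff_le.mp h0) (not_le.mpr hxA)
    rcases mul_eq_zero.mp (hx hxA) with h' | h'
    · exact absurd h' h1
    · exact h'
  · have hQ0 : ∀ᵐ x ∂(lam.restrict Aᶜ), (c - h x) * κ x A = 0 := by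
      have := (lintegral_eq_zero_iff ((measurable_const.sub hmeas).mul hk)).mp hQ
      filter_upwards [this] with x hx using hx
    have hIi2 := (ae_restrict_iff' hA.compl).mp hQ0
    have hatom : ∀ᵐ x ∂lam, h x ≠ c := by
      rw [ae_iff]; simpa using hcatom
    filter_upwards [hIi2, hatom] with x hx hxc hxA
    have hlt : h x < c := lt_of_le_of_ne (not_lt.mp hxA) hxc
    have h1 : c - h x ≠ 0 := fun h0 => absurd (tsub_eq_zero_iff_le.mp h0) (not_le.mpr hlt)
    rcases mul_eq_zero.mp (hx hxA) with h' | h'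
    · exact absurd h' h1
    · exact h'

/-- Two distinct ergodic invariant probability measures of a strong
Feller Markov kernel on a Polish space have disjoint topological supports. -/
theorem disjoint_support_of_ergodic_of_strongFeller
    {X : Type*} [TopologicalSpace X] [PolishSpace X] [MeasurableSpace X] [BorelSpace X]
    (κ : Kernel X X) [IsMarkovKernel κ] (hSF : IsStrongFeller κ)
    (μ ν : Measure X) [IsProbabilityMeasure μ] [IsProbabilityMeasure ν]
    (hμinv : KernelInvariant κ μ) (hμerg : KernelErgodic κ μ)
    (hνinv : KernelInvariant κ ν) (hνerg : KernelErgodic κ ν)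
    (hne : μ ≠ ν) :
    measureSupport μ ∩ measureSupport ν = ∅ := by
  classical
  set lam : Measure X := μ + ν with hlamdef
  haveI : IsFiniteMeasure lam := by rw [hlamdef]; infer_instance
  have hμle : μ ≤ lam := by rw [hlamdef]; exact Measure.le_add_right le_rfl
  have hνle : ν ≤ lam := by
    rw [hlamdef]; intro s; simpa [Measure.add_apply] using le_add_self
  have hμlam : μ ≪ lam := hμle.absolutelyContinuous
  have hνlam : ν ≪ lam := hνle.absolutelyContinuous
  have hlaminv : ∀ A : Set X, MeasurableSet A → lam A = ∫⁻ x, κ x A ∂lam := by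
    intro A hAm
    rw [hlamdef, Measure.add_apply, lintegral_add_measure, hμinv A hAm, hνinv A hAm]
  set h : X → ℝ≥0∞ := μ.rnDeriv lam with hhdef
  have hmeas : Measurable h := Measure.measurable_rnDeriv μ lam
  have hwd : lam.withDensity h = μ := Measure.withDensity_rnDeriv_eq μ lam hμlam
  have hμset : ∀ {S : Set X}, MeasurableSet S → μ S = ∫⁻ x in S, h x ∂lam := fun hS =>
    (Measure.setLIntegral_rnDeriv' hμlam hS).symm
  have hlamuniv : lam Set.univ = 2 := by
    rw [hlamdef, Measure.add_apply, measure_univ, measure_univ, one_add_one_eq_two]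
  set T1 : Set ℝ≥0∞ := {c | 0 < lam {x | h x ≤ c}} with hT1
  set T2 : Set ℝ≥0∞ := {c | 0 < lam {x | c ≤ h x}} with hT2
  set a := sInf T1 with hadef
  set b := sSup T2 with hbdef
  have hlow : ∀ c, c < a → lam {x | h x ≤ c} = 0 := by
    intro c hc
    by_contra hne0
    have hmem : c ∈ T1 := by
      have hp : 0 < lam {x | h x ≤ c} := pos_iff_ne_zero.mpr hne0
      exact hp
    exact absurd (sInf_le hmem) (not_le.mpr hc)
  have hhigh : ∀ c, b < c → lam {x | c ≤ h x} = 0 := by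
    intro c hc
    by_contra hne0
    have hmem : c ∈ T2 := by
      have hp : 0 < lam {x | c ≤ h x} := pos_iff_ne_zero.mpr hne0
      exact hp
    exact absurd (le_sSup hmem) (not_le.mpr hc)
  have f1 : ∀ c, a < c → 0 < lam {x | h x < c} := by
    intro c hc
    obtain ⟨c', hc'T, hc'lt⟩ := sInf_lt_iff.mp hc
    exact lt_of_lt_of_le hc'T (measure_mono fun x hx => lt_of_le_of_lt hx hc'lt)
  have f2 : ∀ c, c < b → 0 < lam {x | c < h x} := by
    intro c hc
    obtain ⟨c', hc'T, hc'gt⟩ := lt_sSup_iff.mp hc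
    exact lt_of_lt_of_le hc'T (measure_mono fun x hx => lt_of_lt_of_le hc'gt hx)
  have f3 : lam {x | h x < a} = 0 := by
    have hsub : {x | h x < a} ⊆
        ⋃ q : ℚ, {x | h x ≤ (Real.toNNReal q : ℝ≥0∞) ∧ (Real.toNNReal q : ℝ≥0∞) < a} := by
      intro x hx
      obtain ⟨q, _, h1, h2⟩ := ENNReal.lt_iff_exists_rat_btwn.mp hx
      exact Set.mem_iUnion.mpr ⟨q, h1.le, h2⟩
    refine measure_mono_null hsub (measure_iUnion_null fun q => ?_)
    by_cases hq : (Real.toNNReal q : ℝ≥0∞) < a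
    · exact measure_mono_null (fun x hx => hx.1) (hlow _ hq)
    · exact measure_mono_null (fun x hx => (hq hx.2).elim) measure_empty
  have f4 : lam {x | b < h x} = 0 := by
    have hsub : {x | b < h x} ⊆
        ⋃ q : ℚ, {x | (Real.toNNReal q : ℝ≥0∞) ≤ h x ∧ b < (Real.toNNReal q : ℝ≥0∞)} := by
      intro x hx
      obtain ⟨q, _, h1, h2⟩ := ENNReal.lt_iff_exists_rat_btwn.mp hx
      exact Set.mem_iUnion.mpr ⟨q, h2.le, h1⟩
    refine measure_mono_null hsub (measure_iUnion_null fun q => ?_)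
    by_cases hq : b < (Real.toNNReal q : ℝ≥0∞)
    · exact measure_mono_null (fun x hx => hx.1) (hhigh _ hq)
    · exact measure_mono_null (fun x hx => (hq hx.2).elim) measure_empty
  have hint : ∫⁻ x, h x ∂lam = 1 := by
    rw [hhdef, Measure.lintegral_rnDeriv hμlam, measure_univ]
  have h1T1 : (1 : ℝ≥0∞) ∈ T1 := by
    by_contra hn
    have h0 : lam {x | h x ≤ 1} = 0 := by
      by_contra hne0
      exact hn (pos_iff_ne_zero.mpr hne0)
    have hcover : lam Set.univ ≤ lam {x | h x ≤ 1} + lam {x | 1 ≤ h x} := by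
      refine le_trans (measure_mono fun x _ => ?_) (measure_union_le _ _)
      rcases le_total (h x) 1 with h' | h'
      · exact Or.inl h'
      · exact Or.inr h'
    rw [hlamuniv, h0, zero_add] at hcover
    have hmark : lam {x | 1 ≤ h x} ≤ 1 := by
      have hm := mul_meas_ge_le_lintegral (μ := lam) hmeas 1
      rwa [one_mul, hint] at hm
    exact ENNReal.one_lt_two.not_ge (hcover.trans hmark)
  have ha1 : a ≤ 1 := sInf_le h1T1
  have hlamne0 : lam ≠ 0 := by
    intro h0
    rw [h0] at hlamuniv
    simp at hlamuniv
  haveI : (ae lam).NeBot := ae_neBot.mpr hlamne0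
  have haeb : ∀ᵐ x ∂lam, a ≤ h x ∧ h x ≤ b := by
    have h3 : ∀ᵐ x ∂lam, ¬ h x < a := ae_iff.mpr (by simpa using f3)
    have h4 : ∀ᵐ x ∂lam, ¬ b < h x := ae_iff.mpr (by simpa using f4)
    filter_upwards [h3, h4] with x hx3 hx4
    exact ⟨not_lt.mp hx3, not_lt.mp hx4⟩
  have hab : a ≤ b := by
    obtain ⟨x, hx⟩ := haeb.exists
    exact hx.1.trans hx.2
  have haneb : a ≠ b := by
    intro hEq
    have hconst : ∀ᵐ x ∂lam, h x = a := by
      filter_upwards [haeb] with x hx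
      exact le_antisymm (hEq ▸ hx.2) hx.1
    have hmeasB : ∀ B : Set X, MeasurableSet B → μ B = a * lam B := by
      intro B hB
      rw [hμset hB, setLIntegral_congr_fun_ae hB (hconst.mono fun x hx _ => hx),
        setLIntegral_const]
    have ha2 : a * 2 = 1 := by
      have hu := hmeasB Set.univ MeasurableSet.univ
      rw [measure_univ, hlamuniv] at hu
      exact hu.symm
    refine hne ?_
    ext B hB
    have h2 : μ B + μ B = μ B + ν B := by
      have ht : 2 * μ B = μ B + ν B := by
        calc 2 * μ B = 2 * (a * lam B) := by rw [hmeasB B hB]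
          _ = (a * 2) * lam B := by ring
          _ = lam B := by rw [ha2, one_mul]
          _ = μ B + ν B := by rw [hlamdef, Measure.add_apply]
      calc μ B + μ B = 2 * μ B := (two_mul _).symm
        _ = μ B + ν B := ht
    exact (ENNReal.add_right_inj (measure_ne_top μ B)).mp h2
  have haltb : a < b := lt_of_le_of_ne hab haneb
  set b' := min b 2 with hb'def
  have hb'gt : a < b' := lt_min haltb (lt_of_le_of_lt ha1 one_lt_two)
  have hb'top : b' ≠ ⊤ := ne_top_of_le_ne_top (by norm_num) (min_le_right _ _)
  have hatop : a ≠ ⊤ := ne_top_of_le_ne_top one_ne_top ha1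
  have htoR : a.toReal < b'.toReal := (ENNReal.toReal_lt_toReal hatop hb'top).mpr hb'gt
  have hN : Set.Countable {t : ℝ≥0∞ | 0 < lam {x | h x = t}} :=
    Measure.countable_meas_level_set_pos hmeas
  have hnotsub : ¬ (Set.Ioo a.toReal b'.toReal ⊆
      ENNReal.ofReal ⁻¹' {t : ℝ≥0∞ | 0 < lam {x | h x = t}}) := by
    intro hsub
    have hinj : Set.InjOn ENNReal.ofReal (Set.Ioo a.toReal b'.toReal) := by
      intro r hr s hs hrs
      have hr0 : 0 ≤ r := le_trans ENNReal.toReal_nonneg hr.1.le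
      have hs0 : 0 ≤ s := le_trans ENNReal.toReal_nonneg hs.1.le
      rwa [ENNReal.ofReal_eq_ofReal_iff hr0 hs0] at hrs
    have hcnt : (Set.Ioo a.toReal b'.toReal).Countable :=
      Set.MapsTo.countable_of_injOn (f := ENNReal.ofReal) (fun x hx => hsub hx) hinj hN
    rw [← Cardinal.le_aleph0_iff_set_countable, Cardinal.mk_Ioo_real htoR] at hcnt
    exact Cardinal.aleph0_lt_continuum.not_ge hcnt
  obtain ⟨r, hrI, hrN⟩ := Set.not_subset.mp hnotsub
  set c := ENNReal.ofReal r with hcdef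
  have hac : a < c := (ENNReal.lt_ofReal_iff_toReal_lt hatop).mpr hrI.1
  have hcb' : c < b' :=
    (ENNReal.ofReal_lt_iff_lt_toReal (le_trans ENNReal.toReal_nonneg hrI.1.le) hb'top).mpr hrI.2
  have hcb : c < b := lt_of_lt_of_le hcb' (min_le_left _ _)
  have hctop : c ≠ ⊤ := ENNReal.ofReal_ne_top
  have hc0 : 0 < c := lt_of_le_of_lt zero_le hac
  have hcatom : lam {x | h x = c} = 0 := by
    by_contra h0
    exact hrN (pos_iff_ne_zero.mpr h0)
  obtain ⟨hi, hii⟩ := level_flux κ lam μ hlaminv hμinv hmeas hwd hctop hcatom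
  set A := {x | c < h x} with hAdef
  have hA : MeasurableSet A := measurableSet_lt measurable_const hmeas
  have hμA1 : μ A = 1 := by
    have hergApply : μ A = 0 ∨ μ A = 1 := by
      refine hμerg A hA ?_
      filter_upwards [hμlam.ae_le hi] with x hx hxA
      exact (prob_compl_eq_zero_iff hA).mp (hx hxA)
    rcases hergApply with h0 | h1
    · exfalso
      have hz : ∫⁻ x in A, h x ∂lam = 0 := by rw [← hμset hA]; exact h0
      have hz2 : ∀ᵐ x ∂(lam.restrict A), h x = 0 := by
        have := (lintegral_eq_zero_iff hmeas).mp hz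
        filter_upwards [this] with x hx using hx
      have hz' : ∀ᵐ x ∂lam, x ∈ A → h x = 0 := (ae_restrict_iff' hA).mp hz2
      have h5 : lam {x | ¬ (x ∈ A → h x = 0)} = 0 := ae_iff.mp hz'
      have hAnull : lam A = 0 := by
        refine measure_mono_null (fun x hxA => ?_) h5
        intro himp
        exact (lt_trans hc0 hxA).ne' (himp hxA)
      exact (f2 c hcb).ne' hAnull
    · exact h1
  have hνA0 : ν A = 0 := by
    have hergApply : ν Aᶜ = 0 ∨ ν Aᶜ = 1 := by
      refine hνerg Aᶜ hA.compl ?_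
      filter_upwards [hνlam.ae_le hii] with x hx hxA
      exact (prob_compl_eq_one_iff hA).mpr (hx hxA)
    rcases hergApply with h0 | h1
    · exfalso
      have hμAc : μ Aᶜ = 0 := (prob_compl_eq_zero_iff hA).mpr hμA1
      have hlamAc : lam Aᶜ = 0 := by
        rw [hlamdef, Measure.add_apply, hμAc, h0, add_zero]
      have hsub : {x | h x < c} ⊆ Aᶜ := by
        intro x hx
        have hx' : h x < c := hx
        have hn : ¬ c < h x := not_lt.mpr hx'.le
        exact hn
      exact (f1 c hac).ne' (measure_mono_null hsub hlamAc)
    · exact (prob_compl_eq_one_iff hA).mp h1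
  set ψ : X → ℝ := A.indicator 1 with hψdef
  have hψm : Measurable ψ := measurable_one.indicator hA
  have hψb : ∃ C, ∀ x, |ψ x| ≤ C := by
    refine ⟨1, fun x => ?_⟩
    by_cases hx : x ∈ A
    · simp [hψdef, Set.indicator_of_mem hx]
    · simp [hψdef, Set.indicator_of_notMem hx]
  have hg : Continuous fun x => ∫ y, ψ y ∂(κ x) := hSF ψ hψm hψb
  have hgval : ∀ x : X, (∫ y, ψ y ∂(κ x)) = (κ x A).toReal := fun x =>
    integral_indicator_one hA
  have hgμ : μ {x | (∫ y, ψ y ∂(κ x)) ≠ 1} = 0 := by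
    have hae : ∀ᵐ x ∂μ, (∫ y, ψ y ∂(κ x)) = 1 := by
      have hxA : ∀ᵐ x ∂μ, x ∈ A := by
        rw [ae_iff]
        exact (prob_compl_eq_zero_iff hA).mpr hμA1
      filter_upwards [hxA, hμlam.ae_le hi] with x hx1 hx2
      rw [hgval x, (prob_compl_eq_zero_iff hA).mp (hx2 hx1)]
      simp
    exact ae_iff.mp hae
  have hgν : ν {x | (∫ y, ψ y ∂(κ x)) ≠ 0} = 0 := by
    have hae : ∀ᵐ x ∂ν, (∫ y, ψ y ∂(κ x)) = 0 := by
      have hxA : ∀ᵐ x ∂ν, x ∈ Aᶜ := by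
        rw [ae_iff]
        have he : {x | ¬ x ∈ Aᶜ} = A := by ext x; simp
        rw [he]
        exact hνA0
      filter_upwards [hxA, hνlam.ae_le hii] with x hx1 hx2
      rw [hgval x, hx2 hx1]
      simp
    exact ae_iff.mp hae
  rw [Set.eq_empty_iff_forall_notMem]
  rintro z ⟨hzμ, hzν⟩
  have hU1 : IsOpen {x | (∫ y, ψ y ∂(κ x)) ≠ 1} := IsOpen.preimage hg isOpen_ne
  have hU0 : IsOpen {x | (∫ y, ψ y ∂(κ x)) ≠ 0} := IsOpen.preimage hg isOpen_ne
  have hz1 : (∫ y, ψ y ∂(κ z)) = 1 := by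
    by_contra hz'
    have hpos := hzμ _ hU1 hz'
    rw [hgμ] at hpos
    exact lt_irrefl 0 hpos
  have hz0 : (∫ y, ψ y ∂(κ z)) = 0 := by
    by_contra hz'
    have hpos := hzν _ hU0 hz'
    rw [hgν] at hpos
    exact lt_irrefl 0 hpos
  rw [hz0] at hz1
  norm_num at hz1
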